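/- Let g ≥ 1 be an integer and p an odd prime. Then the polynomial x^{2g} − x − 1 with coefficients in ℤ/pℤ is squarefree (equivalently, has no multiple root in an algebraic closure of 𝔽_p) if and only if p does not divide the integer N(g) = (2g)^{2g} − (1−2g)^{2g−1}. In other words, the odd prime divisors of the discriminant of x^{2g} − x − 1 are exactly the odd prime divisors of N(g). -/

import Mathlib

open Polynomial

/-- Let `g ≥ 1` and let `p` be an odd prime. The polynomial `x^(2g) - x - 1` over
`ℤ/pℤ` is squarefree (equivalently, has no multiple root in an algebraic closure of
`𝔽_p`) if and only if `p` does not divide `N(g) = (2g)^(2g) - (1-2g)^(2g-1)`. -/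
theorem squarefree_iff_not_dvd_N (g p : ℕ) (hg : 1 ≤ g) (hp : p.Prime) (hodd : p ≠ 2) :
    Squarefree ((X : Polynomial (ZMod p)) ^ (2 * g) - X - 1) ↔
      ¬ ((p : ℤ) ∣ (2 * g : ℤ) ^ (2 * g) - (1 - 2 * g : ℤ) ^ (2 * g - 1)) := by
  haveI : Fact p.Prime := ⟨hp⟩
  have hn2 : 2 ≤ 2 * g := by omega
  set n := 2 * g with hn
  set m : ZMod p := (n : ZMod p) with hm
  set f : Polynomial (ZMod p) := X ^ n - X - 1 with hf
  have hf' : derivative f = C m * X ^ (n - 1) - 1 := by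
    simp [hf, hm, derivative_X_pow]
  have hxpow : (X : Polynomial (ZMod p)) ^ n = X * X ^ (n - 1) := by
    conv_lhs => rw [show n = (n - 1) + 1 by omega]
    rw [pow_succ']
  have hsq : Squarefree f ↔ IsCoprime f (derivative f) := by
    rw [← Polynomial.separable_def, PerfectField.separable_iff_squarefree]
  have hdvd : ((p : ℤ) ∣ (2 * g : ℤ) ^ (2 * g) - (1 - 2 * g : ℤ) ^ (2 * g - 1)) ↔
      m ^ n = (1 - m) ^ (n - 1) := by
    have hmc : m = 2 * (g : ZMod p) := by rw [hm, hn]; push_cast; ring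
    rw [← ZMod.intCast_zmod_eq_zero_iff_dvd, ← hn]
    push_cast
    rw [← hmc, sub_eq_zero]
  rw [hsq, hdvd]
  by_cases hm0 : m = 0
  · constructor
    · intro _ hN
      rw [hm0, sub_zero, one_pow, zero_pow (by omega : n ≠ 0)] at hN
      exact zero_ne_one hN
    · intro _
      exact ⟨0, -1, by rw [hf', hm0]; simp⟩
  · by_cases hm1 : m = 1
    · constructor
      · intro _ hN
        rw [hm1, one_pow, sub_self, zero_pow (by omega : n - 1 ≠ 0)] at hN
        exact one_ne_zero hN
      · intro _
        refine ⟨-1, X, ?_⟩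
        rw [hf', hf, hm1, hxpow, C_1]
        ring
    · -- main case: m ≠ 0, m ≠ 1
      set e : ZMod p := 1 - m with hedef
      have he : e ≠ 0 := by
        rw [hedef, sub_ne_zero]
        exact fun h => hm1 h.symm
      set α : ZMod p := m * e⁻¹ with hα
      have hmn : m ^ n = m * m ^ (n - 1) := by
        conv_lhs => rw [show n = (n - 1) + 1 by omega]
        rw [pow_succ']
      have hen : e ^ n = e * e ^ (n - 1) := by
        conv_lhs => rw [show n = (n - 1) + 1 by omega]
        rw [pow_succ']
      -- the key evaluation of the derivative at α
      have hkey : eval α (derivative f) = 0 ↔ m ^ n = e ^ (n - 1) := by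
        rw [hf']
        simp only [eval_sub, eval_mul, eval_pow, eval_C, eval_X, eval_one]
        rw [sub_eq_zero, hα, mul_pow, inv_pow, ← mul_assoc, ← hmn,
          mul_inv_eq_one₀ (pow_ne_zero _ he)]
      constructor
      · -- coprime → no common root → ¬ p ∣ N
        intro hco hN
        have hf'α : eval α (derivative f) = 0 := hkey.mpr hN
        have hαn : α ^ n = e⁻¹ := by
          rw [hα, mul_pow, inv_pow, hN, hen, mul_inv]
          field_simp
        have hfα : eval α f = 0 := by
          rw [hf]
          simp only [eval_sub, eval_pow, eval_X, eval_one]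
          rw [hαn, hα]
          have h1 : e * e⁻¹ = 1 := mul_inv_cancel₀ he
          have h2 : e = 1 - m := hedef
          field_simp
          rw [mul_zero, h2, sub_self]
        have hd1 : (X - C α) ∣ f := dvd_iff_isRoot.mpr hfα
        have hd2 : (X - C α) ∣ derivative f := dvd_iff_isRoot.mpr hf'α
        exact Polynomial.not_isUnit_X_sub_C α (hco.isUnit_of_dvd' hd1 hd2)
      · -- ¬ p ∣ N → coprime
        intro hN
        by_contra hco
        apply hN
        classical
        set d := EuclideanDomain.gcd f (derivative f) with hd
        have hdunit : ¬ IsUnit d := fun h => hco (EuclideanDomain.gcd_isUnit_iff.mp h)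
        have hdf : d ∣ f := EuclideanDomain.gcd_dvd_left f (derivative f)
        have hdf' : d ∣ derivative f := EuclideanDomain.gcd_dvd_right f (derivative f)
        set hpoly : Polynomial (ZMod p) := C e * X - C m with hhp
        have hcomb : C m * f - X * derivative f = hpoly := by
          rw [hf, hf', hhp, hxpow, hedef, map_sub, map_one]
          ring
        have hdh : d ∣ hpoly := by
          rw [← hcomb]
          exact dvd_sub (hdf.mul_left _) (hdf'.mul_left _)
        have hhne : hpoly ≠ 0 := by
          intro h0
          have := congrArg (fun q => coeff q 1) h0
          simp [hhp, coeff_sub] at this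
          exact he this
        have hhdeg : hpoly.natDegree = 1 := by
          rw [hhp, sub_eq_add_neg, ← C_neg, natDegree_linear he]
        obtain ⟨c, hc⟩ := hdh
        have hd0 : d ≠ 0 := by
          intro h0; apply hhne; rw [hc, h0, zero_mul]
        have hc0 : c ≠ 0 := by
          intro h0; apply hhne; rw [hc, h0, mul_zero]
        have hdeg : d.natDegree + c.natDegree = 1 := by
          rw [← natDegree_mul hd0 hc0, ← hc, hhdeg]
        have hdnd : d.natDegree ≠ 0 := by
          intro h0
          apply hdunit
          rw [Polynomial.eq_C_of_natDegree_eq_zero h0]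
          refine isUnit_C.mpr (isUnit_iff_ne_zero.mpr ?_)
          intro hcz
          apply hd0
          rw [Polynomial.eq_C_of_natDegree_eq_zero h0, hcz, map_zero]
        have hcnd : c.natDegree = 0 := by omega
        have hhα : eval α hpoly = 0 := by
          rw [hhp]
          simp only [eval_sub, eval_mul, eval_C, eval_X]
          rw [hα, ← mul_assoc, mul_comm e m, mul_assoc, mul_inv_cancel₀ he, mul_one, sub_self]
        have hcα : eval α c ≠ 0 := by
          rw [Polynomial.eq_C_of_natDegree_eq_zero hcnd, eval_C]
          intro hz
          apply hc0
          rw [Polynomial.eq_C_of_natDegree_eq_zero hcnd, hz, map_zero]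
        have hdα : eval α d = 0 := by
          have := hhα
          rw [hc, eval_mul] at this
          exact (mul_eq_zero.mp this).resolve_right hcα
        obtain ⟨q, hq⟩ := hdf'
        have hf'α : eval α (derivative f) = 0 := by
          rw [hq, eval_mul, hdα, zero_mul]
        exact hkey.mp hf'α
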